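/- There is a constant C > 0 such that for every nonzero integer k, every y ∈ [0,1], and every real number A with |A| ≤ 10, the integral ∫₀¹ G_k(y,z)·|log|z − A|| dz is at most C·log(2 + |k|)/k². -/

import Mathlib

open Real MeasureTheory intervalIntegral Set

noncomputable def greenG (k : ℤ) (y z : ℝ) : ℝ :=
  if y ≤ z then Real.sinh (k * (1 - z)) * Real.sinh (k * y) / (k * Real.sinh k)
  else Real.sinh (k * z) * Real.sinh (k * (1 - y)) / (k * Real.sinh k)


lemma neg_log_le_aux {t : ℝ} (ht : 0 < t) :
    -Real.log t ≤ 2 * t ^ (-(2⁻¹:ℝ)) - 2 := by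
  have h1 : Real.log (t ^ (-(2⁻¹:ℝ))) = -(2⁻¹) * Real.log t := Real.log_rpow ht _
  have h2 : Real.log (t ^ (-(2⁻¹:ℝ))) ≤ t ^ (-(2⁻¹:ℝ)) - 1 :=
    Real.log_le_sub_one_of_pos (Real.rpow_pos_of_pos ht _)
  rw [h1] at h2; linarith

lemma abs_log_abs_le_rpow {t : ℝ} (ht : |t| ≤ 1) :
    |Real.log (|t|)| ≤ 2 * |t| ^ (-(2⁻¹:ℝ)) := by
  rcases eq_or_lt_of_le (abs_nonneg t) with h0 | h0
  · rw [← h0]; simp [Real.log_zero, Real.zero_rpow (by norm_num : (-(2⁻¹:ℝ)) ≠ 0)]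
  · have hlog : Real.log |t| ≤ 0 := Real.log_nonpos (abs_nonneg t) ht
    rw [abs_of_nonpos hlog]
    have := neg_log_le_aux h0
    linarith

lemma abs_log_abs_le_all (t : ℝ) :
    |Real.log (|t|)| ≤ 2 * |t| ^ (-(2⁻¹:ℝ)) + |t| := by
  rcases le_or_gt |t| 1 with h | h
  · have := abs_log_abs_le_rpow h
    have := abs_nonneg t
    linarith
  · have hlog : 0 ≤ Real.log |t| := Real.log_nonneg h.le
    rw [abs_of_nonneg hlog]
    have h1 : Real.log |t| ≤ |t| - 1 := Real.log_le_sub_one_of_pos (by linarith)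
    have h2 : 0 ≤ |t| ^ (-(2⁻¹:ℝ)) := Real.rpow_nonneg (abs_nonneg t) _
    linarith


lemma intInt_rpow_abs (a b : ℝ) :
    IntervalIntegrable (fun t : ℝ => |t| ^ (-(2⁻¹:ℝ))) volume a b := by
  suffices H : ∀ c : ℝ, IntervalIntegrable (fun t : ℝ => |t| ^ (-(2⁻¹:ℝ))) volume 0 c by
    exact (H a).symm.trans (H b)
  have Hnn : ∀ c : ℝ, 0 ≤ c →
      IntervalIntegrable (fun t : ℝ => |t| ^ (-(2⁻¹:ℝ))) volume 0 c := by
    intro c hc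
    have hbase : IntervalIntegrable (fun t : ℝ => t ^ (-(2⁻¹:ℝ))) volume 0 c :=
      intervalIntegrable_rpow' (by norm_num)
    apply hbase.mono_fun
    · exact ((measurable_abs.pow_const _).aestronglyMeasurable)
    · rw [uIoc_of_le hc]
      filter_upwards [ae_restrict_mem measurableSet_Ioc] with x hx
      rw [Real.norm_eq_abs, Real.norm_eq_abs, abs_of_nonneg hx.1.le]
  intro c
  rcases le_or_gt 0 c with hc | hc
  · exact Hnn c hc
  · rw [IntervalIntegrable.iff_comp_neg]
    simp only [abs_neg, neg_zero]
    exact (Hnn (-c) (by linarith)).symm.symm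

lemma intInt_abslogabs (a b : ℝ) :
    IntervalIntegrable (fun t : ℝ => |Real.log (|t|)|) volume a b := by
  suffices H : ∀ c : ℝ, IntervalIntegrable (fun t : ℝ => |Real.log (|t|)|) volume 0 c by
    exact (H a).symm.trans (H b)
  have Hnn : ∀ c : ℝ, 0 ≤ c →
      IntervalIntegrable (fun t : ℝ => |Real.log (|t|)|) volume 0 c := by
    intro c hc
    have hg : IntervalIntegrable (fun t : ℝ => 2 * |t| ^ (-(2⁻¹:ℝ)) + |t|) volume 0 c :=
      ((intInt_rpow_abs 0 c).const_mul 2).add (continuous_abs.intervalIntegrable 0 c)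
    apply hg.mono_fun'
    · exact ((Real.measurable_log.comp measurable_abs).abs).aestronglyMeasurable
    · filter_upwards with x
      rw [Real.norm_eq_abs, abs_abs]
      exact abs_log_abs_le_all x
  intro c
  rcases le_or_gt 0 c with hc | hc
  · exact Hnn c hc
  · rw [IntervalIntegrable.iff_comp_neg]
    simp only [abs_neg, neg_zero]
    exact Hnn (-c) (by linarith)

lemma intInt_L (A a b : ℝ) :
    IntervalIntegrable (fun z : ℝ => |Real.log (|z - A|)|) volume a b := by
  have := (intInt_abslogabs (a - A) (b - A)).comp_sub_right A
  simpa using this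

lemma indicator_log_integral_le (A : ℝ) {δ : ℝ} (hδ0 : 0 < δ) (hδ1 : δ ≤ 1) :
    ∫ z in (0:ℝ)..1,
        (Icc (A-δ) (A+δ)).indicator (fun z => |Real.log (|z - A|)|) z
      ≤ 8 * δ ^ (2⁻¹:ℝ) := by
  set L : ℝ → ℝ := fun z => |Real.log (|z - A|)| with hL
  have hab : A - δ ≤ A + δ := by linarith
  have s1 : ∫ z in (0:ℝ)..1, (Icc (A-δ) (A+δ)).indicator L z
      = ∫ z in Ioc (0:ℝ) 1, (Icc (A-δ) (A+δ)).indicator L z :=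
    intervalIntegral.integral_of_le zero_le_one
  have s2 : ∫ z in Ioc (0:ℝ) 1, (Icc (A-δ) (A+δ)).indicator L z
      = ∫ z in Ioc (0:ℝ) 1 ∩ Icc (A-δ) (A+δ), L z :=
    setIntegral_indicator measurableSet_Icc
  have hLI : IntegrableOn L (Icc (A-δ) (A+δ)) volume :=
    (intervalIntegrable_iff_integrableOn_Icc_of_le hab).mp (intInt_L A _ _)
  have s3 : ∫ z in Ioc (0:ℝ) 1 ∩ Icc (A-δ) (A+δ), L z ≤ ∫ z in Icc (A-δ) (A+δ), L z :=
    setIntegral_mono_set hLI (Filter.Eventually.of_forall fun x => abs_nonneg _)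
      (HasSubset.Subset.eventuallyLE inter_subset_right)
  have s4 : ∫ z in Icc (A-δ) (A+δ), L z = ∫ z in (A-δ)..(A+δ), L z := by
    rw [integral_Icc_eq_integral_Ioc, intervalIntegral.integral_of_le hab]
  have s5 : ∫ z in (A-δ)..(A+δ), L z = ∫ t in (-δ)..δ, |Real.log (|t|)| := by
    have h := intervalIntegral.integral_comp_sub_right (a := A-δ) (b := A+δ)
      (fun t => |Real.log (|t|)|) A
    have e1 : A - δ - A = -δ := by ring
    have e2 : A + δ - A = δ := by ring
    rw [e1, e2] at h
    rw [← h]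
  have s6 : ∫ t in (-δ)..δ, |Real.log (|t|)| ≤ ∫ t in (-δ)..δ, 2 * |t| ^ (-(2⁻¹:ℝ)) := by
    apply intervalIntegral.integral_mono_on (by linarith) (intInt_abslogabs _ _)
      ((intInt_rpow_abs _ _).const_mul 2)
    intro t ht
    apply abs_log_abs_le_rpow
    rw [abs_le]
    exact ⟨by linarith [ht.1], by linarith [ht.2]⟩
  have half : ∫ t in (0:ℝ)..δ, 2 * |t| ^ (-(2⁻¹:ℝ)) = 2 * (2 * δ ^ (2⁻¹:ℝ)) := by
    rw [intervalIntegral.integral_const_mul]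
    have hcg : ∫ t in (0:ℝ)..δ, |t| ^ (-(2⁻¹:ℝ)) = ∫ t in (0:ℝ)..δ, t ^ (-(2⁻¹:ℝ)) := by
      apply integral_congr
      intro t ht
      rw [uIcc_of_le hδ0.le] at ht
      simp only [abs_of_nonneg ht.1]
    rw [hcg, integral_rpow (Or.inl (by norm_num))]
    rw [Real.zero_rpow (by norm_num)]
    ring
  have s7 : ∫ t in (-δ)..δ, 2 * |t| ^ (-(2⁻¹:ℝ)) = 8 * δ ^ (2⁻¹:ℝ) := by
    have hadd : ∫ t in (-δ)..δ, 2 * |t| ^ (-(2⁻¹:ℝ))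
        = (∫ t in (-δ)..(0:ℝ), 2 * |t| ^ (-(2⁻¹:ℝ)))
          + ∫ t in (0:ℝ)..δ, 2 * |t| ^ (-(2⁻¹:ℝ)) :=
      (integral_add_adjacent_intervals ((intInt_rpow_abs _ _).const_mul 2)
        ((intInt_rpow_abs _ _).const_mul 2)).symm
    have hneg := intervalIntegral.integral_comp_neg (a := (0:ℝ)) (b := δ)
      (fun t => 2 * |t| ^ (-(2⁻¹:ℝ)))
    simp only [abs_neg, neg_zero] at hneg
    rw [hadd, ← hneg, half]
    ring
  calc ∫ z in (0:ℝ)..1, (Icc (A-δ) (A+δ)).indicator L z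
      = ∫ z in Ioc (0:ℝ) 1 ∩ Icc (A-δ) (A+δ), L z := by rw [s1, s2]
    _ ≤ ∫ z in Icc (A-δ) (A+δ), L z := s3
    _ = ∫ t in (-δ)..δ, |Real.log (|t|)| := by rw [s4, s5]
    _ ≤ ∫ t in (-δ)..δ, 2 * |t| ^ (-(2⁻¹:ℝ)) := s6
    _ = 8 * δ ^ (2⁻¹:ℝ) := s7

lemma integral_sinh_mul {K : ℝ} (hK : K ≠ 0) (a b : ℝ) :
    ∫ z in a..b, Real.sinh (K * z) = (Real.cosh (K * b) - Real.cosh (K * a)) / K := by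
  have hder : ∀ x ∈ Set.uIcc a b, HasDerivAt (fun z => Real.cosh (K * z) / K)
      (Real.sinh (K * x)) x := by
    intro x _
    have h1 : HasDerivAt (fun z : ℝ => K * z) K x := by
      simpa using (hasDerivAt_id x).const_mul K
    have h2 := (Real.hasDerivAt_cosh (K * x)).comp x h1
    have h3 := h2.div_const K
    rw [mul_div_cancel_right₀ _ hK] at h3
    exact h3
  rw [intervalIntegral.integral_eq_sub_of_hasDerivAt hder
    ((Real.continuous_sinh.comp (continuous_const.mul continuous_id)).intervalIntegrable a b)]
  ring

lemma greenG_cont (k : ℤ) (y : ℝ) : Continuous (fun z => greenG k y z) := by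
  unfold greenG
  apply Continuous.if_le
  · fun_prop
  · fun_prop
  · exact continuous_const
  · exact continuous_id
  · intro z h
    rw [← h]
    ring

lemma greenG_nonneg {k : ℤ} (hk : 1 ≤ k) {y : ℝ} (hy : y ∈ Icc (0:ℝ) 1)
    {z : ℝ} (hz : z ∈ Icc (0:ℝ) 1) : 0 ≤ greenG k y z := by
  have hK : (1:ℝ) ≤ (k:ℝ) := by exact_mod_cast hk
  have hK0 : (0:ℝ) < (k:ℝ) := by linarith
  have hs : 0 < Real.sinh (k:ℝ) := Real.sinh_pos_iff.mpr hK0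
  obtain ⟨hy0, hy1⟩ := hy
  obtain ⟨hz0, hz1⟩ := hz
  have snn : ∀ x : ℝ, 0 ≤ x → 0 ≤ Real.sinh x := fun x hx => Real.sinh_nonneg_iff.mpr hx
  unfold greenG
  split_ifs with h
  · exact div_nonneg (mul_nonneg (snn _ (by nlinarith)) (snn _ (by nlinarith)))
      (le_of_lt (by positivity))
  · exact div_nonneg (mul_nonneg (snn _ (by nlinarith)) (snn _ (by nlinarith)))
      (le_of_lt (by positivity))

lemma greenG_le {k : ℤ} (hk : 1 ≤ k) {y : ℝ} (hy : y ∈ Icc (0:ℝ) 1)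
    {z : ℝ} (hz : z ∈ Icc (0:ℝ) 1) : greenG k y z ≤ 1 / (2 * (k:ℝ)) := by
  have hK : (1:ℝ) ≤ (k:ℝ) := by exact_mod_cast hk
  have hK0 : (0:ℝ) < (k:ℝ) := by linarith
  have hs : 0 < Real.sinh (k:ℝ) := Real.sinh_pos_iff.mpr hK0
  obtain ⟨hy0, hy1⟩ := hy
  obtain ⟨hz0, hz1⟩ := hz
  have key : ∀ a b : ℝ, 0 ≤ a → 0 ≤ b → a + b ≤ (k:ℝ) →
      Real.sinh a * Real.sinh b / ((k:ℝ) * Real.sinh (k:ℝ)) ≤ 1 / (2 * (k:ℝ)) := by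
    intro a b ha hb hab
    have h1 : Real.cosh (a + b) = Real.cosh a * Real.cosh b + Real.sinh a * Real.sinh b :=
      Real.cosh_add a b
    have h1' : Real.cosh (a - b) = Real.cosh a * Real.cosh b - Real.sinh a * Real.sinh b :=
      Real.cosh_sub a b
    have h2 : 1 ≤ Real.cosh (a - b) := Real.one_le_cosh _
    have h3 : Real.cosh (a + b) - Real.sinh (a + b) = Real.exp (-(a + b)) :=
      Real.cosh_sub_sinh _
    have h3' : Real.exp (-(a + b)) ≤ 1 := Real.exp_le_one_iff.mpr (by linarith)
    have h4 : Real.sinh (a + b) ≤ Real.sinh (k:ℝ) := Real.sinh_le_sinh.mpr hab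
    rw [div_le_div_iff₀ (by positivity) (by positivity)]
    nlinarith
  unfold greenG
  split_ifs with h
  · exact key _ _ (by nlinarith) (by nlinarith) (by nlinarith)
  · exact key _ _ (by nlinarith) (by nlinarith) (by nlinarith)

lemma greenG_integral_le {k : ℤ} (hk : 1 ≤ k) {y : ℝ} (hy : y ∈ Icc (0:ℝ) 1) :
    ∫ z in (0:ℝ)..1, greenG k y z ≤ 1 / (k:ℝ)^2 := by
  have hK : (1:ℝ) ≤ (k:ℝ) := by exact_mod_cast hk
  have hK0 : (0:ℝ) < (k:ℝ) := by linarith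
  have hs : 0 < Real.sinh (k:ℝ) := Real.sinh_pos_iff.mpr hK0
  obtain ⟨hy0, hy1⟩ := hy
  set K : ℝ := (k:ℝ) with hKdef
  have hIcont := (greenG_cont k y).intervalIntegrable (μ := volume)
  have hsplit : ∫ z in (0:ℝ)..1, greenG k y z
      = (∫ z in (0:ℝ)..y, greenG k y z) + ∫ z in y..(1:ℝ), greenG k y z :=
    (integral_add_adjacent_intervals (hIcont 0 y) (hIcont y 1)).symm
  have e1 : ∫ z in (0:ℝ)..y, greenG k y z
      = (Real.cosh (K * y) - Real.cosh (K * 0)) / K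
        * (Real.sinh (K * (1 - y)) / (K * Real.sinh K)) := by
    have heq : EqOn (fun z => greenG k y z)
        (fun z => Real.sinh (K * z) * (Real.sinh (K * (1 - y)) / (K * Real.sinh K)))
        (Set.uIcc 0 y) := by
      intro z hz
      rw [Set.uIcc_of_le hy0] at hz
      simp only [greenG]
      split_ifs with h
      · have hzy : z = y := le_antisymm hz.2 h
        subst hzy; ring
      · ring
    rw [integral_congr heq, intervalIntegral.integral_mul_const, integral_sinh_mul hK0.ne']
  have e2 : ∫ z in y..(1:ℝ), greenG k y z
      = (Real.cosh (K * (1 - y)) - Real.cosh (K * 0)) / K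
        * (Real.sinh (K * y) / (K * Real.sinh K)) := by
    have heq : EqOn (fun z => greenG k y z)
        (fun z => Real.sinh (K * (1 - z)) * (Real.sinh (K * y) / (K * Real.sinh K)))
        (Set.uIcc y 1) := by
      intro z hz
      rw [Set.uIcc_of_le hy1] at hz
      simp only [greenG]
      split_ifs with h
      · ring
      · exact absurd hz.1 h
    rw [integral_congr heq, intervalIntegral.integral_mul_const]
    have hcomp : ∫ z in y..(1:ℝ), Real.sinh (K * (1 - z))
        = ∫ t in (1-(1:ℝ))..(1-y), Real.sinh (K * t) :=
      intervalIntegral.integral_comp_sub_left (fun t => Real.sinh (K * t)) 1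
    rw [hcomp]
    rw [integral_sinh_mul hK0.ne']
    norm_num
  rw [hsplit, e1, e2]
  have hsa : Real.sinh (K * y + K * (1 - y)) =
      Real.sinh (K * y) * Real.cosh (K * (1 - y)) + Real.cosh (K * y) * Real.sinh (K * (1 - y)) :=
    Real.sinh_add _ _
  have hKy : K * y + K * (1 - y) = K := by ring
  rw [hKy] at hsa
  have snn : ∀ x : ℝ, 0 ≤ x → 0 ≤ Real.sinh x := fun x hx => Real.sinh_nonneg_iff.mpr hx
  have h1 : 0 ≤ Real.sinh (K * y) := snn _ (by nlinarith)
  have h2 : 0 ≤ Real.sinh (K * (1 - y)) := snn _ (by nlinarith)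
  have hE : (Real.cosh (K * y) - Real.cosh (K * 0)) / K
        * (Real.sinh (K * (1 - y)) / (K * Real.sinh K))
      + (Real.cosh (K * (1 - y)) - Real.cosh (K * 0)) / K
        * (Real.sinh (K * y) / (K * Real.sinh K))
      = ((Real.cosh (K * y) - 1) * Real.sinh (K * (1 - y))
          + (Real.cosh (K * (1 - y)) - 1) * Real.sinh (K * y)) / (K^2 * Real.sinh K) := by
    rw [mul_zero, Real.cosh_zero]
    ring
  rw [hE, div_le_div_iff₀ (by positivity) (by positivity)]
  have hmul : 0 ≤ (Real.sinh (K * y) + Real.sinh (K * (1 - y))) * K^2 :=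
    mul_nonneg (by linarith) (by positivity)
  nlinarith [hsa]

theorem greenG_log_integral_bound :
    ∃ C : ℝ, 0 < C ∧ ∀ (k : ℤ), k ≠ 0 → ∀ y ∈ Set.Icc (0:ℝ) 1, ∀ A : ℝ, |A| ≤ 10 →
      (∫ z in (0:ℝ)..1, greenG k y z * |Real.log (|z - A|)|)
        ≤ C * Real.log (2 + |(k:ℝ)|) / (k:ℝ)^2 := by
  refine ⟨100, by norm_num, ?_⟩
  suffices Hpos : ∀ (k : ℤ), 1 ≤ k → ∀ y ∈ Set.Icc (0:ℝ) 1, ∀ A : ℝ, |A| ≤ 10 →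
      (∫ z in (0:ℝ)..1, greenG k y z * |Real.log (|z - A|)|)
        ≤ 100 * Real.log (2 + |(k:ℝ)|) / (k:ℝ)^2 by
    intro k hk y hy A hA
    rcases lt_or_gt_of_ne hk with hneg | hpos
    · have hm : 1 ≤ -k := by omega
      have H := Hpos (-k) hm y hy A hA
      have hGG : ∀ z : ℝ, greenG (-k) y z = greenG k y z := by
        intro z
        unfold greenG
        have hc : ((-k:ℤ):ℝ) = -(k:ℝ) := by push_cast; ring
        rw [hc]
        simp only [neg_mul, Real.sinh_neg]
        split_ifs with h <;> ring
      simp only [hGG] at H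
      have hcast : ((-k : ℤ) : ℝ) = -(k:ℝ) := by push_cast; ring
      rw [hcast, abs_neg, neg_sq] at H
      exact H
    · exact Hpos k hpos y hy A hA
  intro k hk y hy A hA
  have hK : (1:ℝ) ≤ (k:ℝ) := by exact_mod_cast hk
  have hK0 : (0:ℝ) < (k:ℝ) := by linarith
  set K : ℝ := (k:ℝ) with hKdef
  set L : ℝ → ℝ := fun z => |Real.log (|z - A|)| with hLdef
  set δ : ℝ := (11 * K^2)⁻¹ with hδdef
  set Lg : ℝ := Real.log (11 * K^2) with hLgdef
  have hδ0 : 0 < δ := by positivity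
  have hδ1 : δ ≤ 1 := by
    rw [hδdef]
    rw [inv_le_one_iff₀]
    right; nlinarith
  have hLgδ : Real.log δ = -Lg := by rw [hδdef, Real.log_inv]
  have hLg0 : 0 < Lg := Real.log_pos (by nlinarith)
  set ind : ℝ → ℝ := (Icc (A-δ) (A+δ)).indicator L with hinddef
  have hindnn : ∀ z, 0 ≤ ind z := fun z =>
    Set.indicator_nonneg (fun t _ => abs_nonneg _) z
  -- pointwise bound on L
  have hLpt : ∀ z ∈ Icc (0:ℝ) 1, L z ≤ Lg + ind z := by
    intro z hz
    by_cases hc : |z - A| ≤ δ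
    · have hmem : z ∈ Icc (A-δ) (A+δ) := by
        rw [mem_Icc]
        have := abs_le.mp hc
        constructor <;> linarith [this.1, this.2]
      have : ind z = L z := by rw [hinddef, Set.indicator_of_mem hmem]
      rw [this]
      linarith
    · push_neg at hc
      have h0 : 0 < |z - A| := lt_trans hδ0 hc
      have hub : |z - A| ≤ 11 * K^2 := by
        have h1 : |z - A| ≤ |z| + |A| := abs_sub _ _
        have h2 : |z| ≤ 1 := abs_le.mpr ⟨by linarith [hz.1], hz.2⟩
        nlinarith
      have hlog : |Real.log (|z - A|)| ≤ Lg := by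
        rw [abs_le]
        constructor
        · rw [← hLgδ]
          exact Real.log_le_log hδ0 hc.le
        · exact Real.log_le_log h0 hub
      have := hindnn z
      simp only [hLdef]
      linarith
  -- pointwise bound on the product
  have hpt : ∀ z ∈ Icc (0:ℝ) 1,
      greenG k y z * L z ≤ Lg * greenG k y z + (1 / (2*K)) * ind z := by
    intro z hz
    have h1 := greenG_nonneg hk hy hz
    have h2 := greenG_le hk hy hz
    have h3 := hLpt z hz
    have h4 := hindnn z
    have h5 : (0:ℝ) ≤ L z := abs_nonneg _
    nlinarith [mul_le_mul_of_nonneg_left h3 h1, mul_le_mul_of_nonneg_right h2 h4]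
  -- integrability
  have hLint : IntervalIntegrable L volume 0 1 := intInt_L A 0 1
  have hGLint : IntervalIntegrable (fun z => greenG k y z * L z) volume 0 1 :=
    hLint.continuousOn_mul (greenG_cont k y).continuousOn
  have hindint : IntervalIntegrable ind volume 0 1 := by
    rw [intervalIntegrable_iff] at hLint ⊢
    exact hLint.indicator measurableSet_Icc
  have hGint : IntervalIntegrable (fun z => greenG k y z) volume 0 1 :=
    (greenG_cont k y).intervalIntegrable 0 1
  have hRint : IntervalIntegrable
      (fun z => Lg * greenG k y z + (1 / (2*K)) * ind z) volume 0 1 :=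
    (hGint.const_mul Lg).add (hindint.const_mul _)
  -- key numeric facts
  have hlog1 : 1 ≤ Real.log (2 + K) := by
    rw [Real.le_log_iff_exp_le (by linarith)]
    have := Real.exp_one_lt_d9.le
    linarith
  have hLgle : Lg ≤ 5 * Real.log (2 + K) := by
    have e1 : Lg = Real.log 11 + 2 * Real.log K := by
      rw [hLgdef, Real.log_mul (by norm_num) (by positivity), sq, Real.log_mul hK0.ne' hK0.ne']
      ring
    have e2 : Real.log 11 ≤ 3 * Real.log (2 + K) := by
      have h27 : Real.log 11 ≤ Real.log 27 := Real.log_le_log (by norm_num) (by norm_num)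
      have h3 : Real.log 27 = 3 * Real.log 3 := by
        rw [show (27:ℝ) = 3^(3:ℕ) by norm_num, Real.log_pow]
        norm_num
      have h4 : Real.log 3 ≤ Real.log (2 + K) := Real.log_le_log (by norm_num) (by linarith)
      linarith
    have e3 : Real.log K ≤ Real.log (2 + K) := Real.log_le_log hK0 (by linarith)
    linarith
  have hrt : δ ^ (2⁻¹:ℝ) ≤ 1 / (3*K) := by
    have hle : δ ≤ (1/(3*K))^(2:ℕ) := by
      rw [hδdef]
      rw [show ((1/(3*K))^(2:ℕ) : ℝ) = (9*K^2)⁻¹ by field_simp; ring]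
      apply inv_anti₀ (by positivity) (by nlinarith)
    have h1 : δ ^ (2⁻¹:ℝ) ≤ ((1/(3*K))^(2:ℕ)) ^ (2⁻¹:ℝ) :=
      Real.rpow_le_rpow hδ0.le hle (by norm_num)
    have h2 : (((1/(3*K))^(2:ℕ) : ℝ)) ^ (2⁻¹:ℝ) = 1/(3*K) := by
      rw [← Real.rpow_natCast (1/(3*K)) 2, ← Real.rpow_mul (by positivity)]
      norm_num
    rw [h2] at h1
    exact h1
  -- main chain
  have main : (∫ z in (0:ℝ)..1, greenG k y z * L z)
      ≤ Lg * (1/K^2) + (1/(2*K)) * (8 * δ ^ (2⁻¹:ℝ)) := by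
    calc (∫ z in (0:ℝ)..1, greenG k y z * L z)
        ≤ ∫ z in (0:ℝ)..1, (Lg * greenG k y z + (1 / (2*K)) * ind z) :=
          intervalIntegral.integral_mono_on zero_le_one hGLint hRint hpt
      _ = Lg * (∫ z in (0:ℝ)..1, greenG k y z) + (1/(2*K)) * ∫ z in (0:ℝ)..1, ind z := by
          rw [intervalIntegral.integral_add (hGint.const_mul Lg) (hindint.const_mul _),
            intervalIntegral.integral_const_mul, intervalIntegral.integral_const_mul]
      _ ≤ Lg * (1/K^2) + (1/(2*K)) * (8 * δ ^ (2⁻¹:ℝ)) := by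
          have b1 := mul_le_mul_of_nonneg_left (greenG_integral_le hk hy) hLg0.le
          have b2 := mul_le_mul_of_nonneg_left (indicator_log_integral_le A hδ0 hδ1)
            (by positivity : (0:ℝ) ≤ 1/(2*K))
          exact add_le_add b1 b2
  have final : Lg * (1/K^2) + (1/(2*K)) * (8 * δ ^ (2⁻¹:ℝ))
      ≤ 100 * Real.log (2 + K) / K^2 := by
    have h1 : Lg * (1/K^2) ≤ 5 * Real.log (2 + K) / K^2 := by
      rw [div_eq_mul_one_div (5 * Real.log (2 + K)) (K^2)]
      exact mul_le_mul_of_nonneg_right hLgle (by positivity)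
    have h2 : (1/(2*K)) * (8 * δ ^ (2⁻¹:ℝ)) ≤ (1/(2*K)) * (8 * (1/(3*K))) :=
      mul_le_mul_of_nonneg_left (by linarith) (by positivity)
    have h3 : (1/(2*K)) * (8 * (1/(3*K))) = (4/3) / K^2 := by
      field_simp
      ring
    have h4 : (4/3 : ℝ) / K^2 ≤ (4/3) * Real.log (2 + K) / K^2 := by
      apply div_le_div_of_nonneg_right ?_ (by positivity)
      nlinarith
    have h5 : 5 * Real.log (2 + K) / K^2 + (4/3) * Real.log (2 + K) / K^2
        ≤ 100 * Real.log (2 + K) / K^2 := by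
      rw [← add_div]
      apply div_le_div_of_nonneg_right ?_ (by positivity)
      nlinarith
    calc Lg * (1/K^2) + (1/(2*K)) * (8 * δ ^ (2⁻¹:ℝ))
        ≤ 5 * Real.log (2 + K) / K^2 + (4/3) / K^2 := by
          have := h2.trans_eq h3
          linarith
      _ ≤ 100 * Real.log (2 + K) / K^2 := by linarith
  have habs : |(k:ℝ)| = K := abs_of_pos hK0
  rw [habs]
  exact main.trans final
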